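/- For every positive integer m, 2m+1 divides C(3m+1, m+1) * (2m) + C(3m, m), equivalently (1/(2m+1)) * C(3m+1, m+1) is an integer. -/
import Mathlib

theorem stmt_8 (m : ℕ) (hm : 0 < m) :
    (2 * m + 1) ∣ Nat.choose (3 * m + 1) (m + 1) * (2 * m) + Nat.choose (3 * m) m ∧
    (2 * m + 1) ∣ Nat.choose (3 * m + 1) (m + 1) := by
  have hcop1 : Nat.Coprime (2 * m + 1) (m + 1) := by
    have h := Nat.dvd_sub (Dvd.dvd.mul_left (Nat.gcd_dvd_right (2*m+1) (m+1)) 2)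
      (Nat.gcd_dvd_left (2*m+1) (m+1))
    have e : 2 * (m+1) - (2*m+1) = 1 := by omega
    rw [e] at h
    exact Nat.eq_one_of_dvd_one h
  have hcop2 : Nat.Coprime (2 * m + 1) (3 * m + 1) := by
    have h := Nat.dvd_sub (Dvd.dvd.mul_left (Nat.gcd_dvd_left (2*m+1) (3*m+1)) 3)
      (Dvd.dvd.mul_left (Nat.gcd_dvd_right (2*m+1) (3*m+1)) 2)
    have e : 3 * (2*m+1) - 2 * (3*m+1) = 1 := by omega
    rw [e] at h
    exact Nat.eq_one_of_dvd_one h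
  -- key identity 1: C(3m+1, m+1) * (m+1) = C(3m+1, m) * (2m+1)
  have key1 : Nat.choose (3*m+1) (m+1) * (m+1) = Nat.choose (3*m+1) m * (2*m+1) := by
    have := Nat.choose_succ_right_eq (3*m+1) m
    have e : 3*m+1 - m = 2*m+1 := by omega
    rwa [e] at this
  have hdvd : (2 * m + 1) ∣ Nat.choose (3 * m + 1) (m + 1) := by
    have : (2*m+1) ∣ Nat.choose (3*m+1) (m+1) * (m+1) := key1 ▸ Dvd.intro_left _ rfl
    exact (Nat.Coprime.dvd_of_dvd_mul_right hcop1 this)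
  refine ⟨?_, hdvd⟩
  -- key identity 2: (3m+1) * C(3m,m) = C(3m+1, m+1) * (m+1)
  have key2 : (3*m+1) * Nat.choose (3*m) m = Nat.choose (3*m+1) (m+1) * (m+1) :=
    Nat.add_one_mul_choose_eq (3*m) m
  have h3 : (2*m+1) ∣ (3*m+1) * Nat.choose (3*m) m := key2 ▸ hdvd.mul_right _
  have h4 : (2*m+1) ∣ Nat.choose (3*m) m :=
    (Nat.Coprime.dvd_of_dvd_mul_left hcop2 h3)
  exact Nat.dvd_add (hdvd.mul_right _) h4
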